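/- arXiv:2602.10793 — 3 statements merged into one kernel-verified Lean document; each statement's English description precedes it below -/
import Mathlib

section
/- The DemoDICE loss L is L_f-smooth with L_f = (1+γ)²/(1+α); that is, its gradient is Lipschitz continuous with constant L_f: for all ν, ν' : S → ℝ, ‖∇L(ν) − ∇L(ν')‖₂ ≤ ((1+γ)²/(1+α)) ‖ν − ν'‖₂. -/
open Real Finset

/-- Mean absolute deviation bound: if `w` is a probability vector and `|u p| ≤ C`,
then the mean absolute deviation of `u` about its `w`-mean is at most `C`. -/
lemma mad_le_of_abs_le {ι : Type*} [Fintype ι] (w u : ι → ℝ) (hw : ∀ p, 0 ≤ w p)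
    (hw1 : ∑ p, w p = 1) (C : ℝ) (hu : ∀ p, |u p| ≤ C) :
    ∑ p, w p * |u p - ∑ q, w q * u q| ≤ C := by
  classical
  set ub := ∑ q, w q * u q with hubdef
  have hubub : ub ≤ C := by
    calc ub ≤ ∑ q, w q * C := by
          apply Finset.sum_le_sum
          intro q _
          exact mul_le_mul_of_nonneg_left (le_trans (le_abs_self _) (hu q)) (hw q)
      _ = C := by rw [← Finset.sum_mul, hw1, one_mul]
  have hublb : -C ≤ ub := by
    have : ∑ q, w q * (-C) ≤ ub := by
      apply Finset.sum_le_sum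
      intro q _
      exact mul_le_mul_of_nonneg_left (neg_le_of_abs_le (hu q)) (hw q)
    calc -C = ∑ q, w q * (-C) := by rw [← Finset.sum_mul, hw1, one_mul]
      _ ≤ ub := this
  set T : Finset ι := Finset.univ.filter (fun p => ub < u p) with hT
  set pp := ∑ p ∈ T, w p with hpp
  set A := ∑ p ∈ T, w p * (u p - ub) with hA
  set B := ∑ p ∈ Tᶜ, w p * (ub - u p) with hB
  have hsplit : ∑ p, w p * |u p - ub| = A + B := by
    rw [← Finset.sum_add_sum_compl T]
    congr 1
    · apply Finset.sum_congr rfl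
      intro p hp
      rw [hT] at hp
      have := (Finset.mem_filter.mp hp).2
      rw [abs_of_pos (by linarith)]
    · apply Finset.sum_congr rfl
      intro p hp
      have hp' : ¬ ub < u p := by
        intro h
        exact (Finset.mem_compl.mp hp) (by rw [hT]; exact Finset.mem_filter.mpr ⟨Finset.mem_univ _, h⟩)
      rw [abs_of_nonpos (by push_neg at hp'; linarith)]
      ring
  have hAeqB : A = B := by
    have h0 : A - B = ∑ p, w p * (u p - ub) := by
      rw [hA, hB, ← Finset.sum_add_sum_compl T (fun p => w p * (u p - ub))]
      have : ∑ p ∈ Tᶜ, w p * (u p - ub) = - B := by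
        rw [hB, ← Finset.sum_neg_distrib]
        apply Finset.sum_congr rfl
        intro p _
        ring
      rw [this]; ring
    have h1 : ∑ p, w p * (u p - ub) = 0 := by
      have : ∑ p, w p * (u p - ub) = (∑ p, w p * u p) - ub * ∑ p, w p := by
        rw [Finset.mul_sum, ← Finset.sum_sub_distrib]
        apply Finset.sum_congr rfl
        intro p _
        ring
      rw [this, hw1, ← hubdef]
      ring
    have := h0.trans h1
    linarith
  have hA0 : 0 ≤ A := by
    apply Finset.sum_nonneg
    intro p hp
    rw [hT] at hp
    have := (Finset.mem_filter.mp hp).2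
    exact mul_nonneg (hw p) (by linarith)
  have hB0 : 0 ≤ B := by
    apply Finset.sum_nonneg
    intro p hp
    have hp' : ¬ ub < u p := by
      intro h
      exact (Finset.mem_compl.mp hp) (by rw [hT]; exact Finset.mem_filter.mpr ⟨Finset.mem_univ _, h⟩)
    push_neg at hp'
    exact mul_nonneg (hw p) (by linarith)
  have hpp0 : 0 ≤ pp := Finset.sum_nonneg fun p _ => hw p
  have hppq : pp + ∑ p ∈ Tᶜ, w p = 1 := by
    rw [hpp, Finset.sum_add_sum_compl T w, hw1]
  have hq0 : 0 ≤ ∑ p ∈ Tᶜ, w p := Finset.sum_nonneg fun p _ => hw p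
  have hAle : A ≤ pp * (C - ub) := by
    rw [hA, hpp, Finset.sum_mul]
    apply Finset.sum_le_sum
    intro p hp
    rw [hT] at hp
    have := (Finset.mem_filter.mp hp).2
    have hup := (abs_le.mp (hu p)).2
    exact mul_le_mul_of_nonneg_left (by linarith) (hw p)
  have hBle : B ≤ (∑ p ∈ Tᶜ, w p) * (ub + C) := by
    rw [hB, Finset.sum_mul]
    apply Finset.sum_le_sum
    intro p _
    have hup := (abs_le.mp (hu p)).1
    exact mul_le_mul_of_nonneg_left (by linarith) (hw p)
  rw [hsplit]
  set q := ∑ p ∈ Tᶜ, w p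
  -- A = B, A ≤ pp (C - ub), B ≤ q(ub + C), pp + q = 1, everything nonneg, -C ≤ ub ≤ C.
  -- Hence (A+B)² = 4AB ≤ 4 pp q (C-ub)(C+ub) ≤ C², so A + B ≤ C.
  have hC0 : 0 ≤ C := by linarith
  have h1 : A * B ≤ (pp * (C - ub)) * (q * (ub + C)) :=
    mul_le_mul hAle hBle hB0 (mul_nonneg hpp0 (by linarith))
  have hppq4 : pp * q ≤ 1 / 4 := by nlinarith [sq_nonneg (pp - q)]
  have hCub : (C - ub) * (ub + C) ≤ C ^ 2 := by nlinarith [sq_nonneg ub]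
  have hCub0 : 0 ≤ (C - ub) * (ub + C) := mul_nonneg (by linarith) (by linarith)
  have h2 : (pp * q) * ((C - ub) * (ub + C)) ≤ (1 / 4) * C ^ 2 :=
    mul_le_mul hppq4 hCub hCub0 (by norm_num)
  have h3 : A * B ≤ C ^ 2 / 4 := by nlinarith
  nlinarith [h3, hA0, hC0, hAeqB]

set_option maxHeartbeats 1000000 in
/-- The DemoDICE loss `L` is `L_f`-smooth with `L_f = (1+γ)²/(1+α)`:
its gradient is Lipschitz continuous with constant `(1+γ)²/(1+α)`. -/
theorem demoDICE_loss_smooth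
    {S A : Type*} [Fintype S] [Fintype A] [Nonempty S] [Nonempty A]
    (γ α : ℝ) (hγ0 : 0 ≤ γ) (hγ1 : γ < 1) (hα : 0 ≤ α)
    (μ : S → ℝ) (hμ0 : ∀ s, 0 ≤ μ s) (hμ1 : ∑ s, μ s = 1)
    (dU : S × A → ℝ) (hdU0 : ∀ p, 0 < dU p) (hdU1 : ∑ p, dU p = 1)
    (P : S × A → S → ℝ) (hP0 : ∀ p s', 0 ≤ P p s') (hP1 : ∀ p, ∑ s', P p s' = 1)
    (r : S × A → ℝ)
    (Adv : EuclideanSpace ℝ S → S × A → ℝ)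
    (hAdv : ∀ ν p, Adv ν p = r p + γ * ∑ s', P p s' * ν s' - ν p.1)
    (L : EuclideanSpace ℝ S → ℝ)
    (hL : ∀ ν, L ν = (1 - γ) * ∑ s, μ s * ν s
        + (1 + α) * Real.log (∑ p, dU p * Real.exp (Adv ν p / (1 + α)))) :
    ∀ ν ν' : EuclideanSpace ℝ S,
      ‖gradient L ν - gradient L ν'‖ ≤ ((1 + γ) ^ 2 / (1 + α)) * ‖ν - ν'‖ := by
  classical
  set β : ℝ := 1 + α with hβdef
  have hβ0 : (0:ℝ) < β := by rw [hβdef]; linarith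
  clear_value β
  -- coordinate bound in Euclidean space
  have hcoord : ∀ (v : EuclideanSpace ℝ S) (s : S), |v s| ≤ ‖v‖ := by
    intro v s
    rw [EuclideanSpace.norm_eq]
    rw [show |v s| = Real.sqrt (‖v s‖ ^ 2) by
      rw [Real.sqrt_sq_eq_abs]; simp]
    apply Real.sqrt_le_sqrt
    exact Finset.single_le_sum (f := fun i => ‖v i‖ ^ 2) (fun i _ => sq_nonneg _)
      (Finset.mem_univ s)
  -- the linear functionals ℓ p
  set ℓ : S × A → (EuclideanSpace ℝ S →L[ℝ] ℝ) := fun p =>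
    γ • (∑ s' : S, P p s' • (EuclideanSpace.proj s' : EuclideanSpace ℝ S →L[ℝ] ℝ))
      - EuclideanSpace.proj p.1 with hℓdef
  have hℓ : ∀ p (v : EuclideanSpace ℝ S), ℓ p v = γ * ∑ s', P p s' * v s' - v p.1 := by
    intro p v
    simp [hℓdef, ContinuousLinearMap.sum_apply, Finset.mul_sum]
  have hℓ_bound : ∀ p (v : EuclideanSpace ℝ S), |ℓ p v| ≤ (1 + γ) * ‖v‖ := by
    intro p v
    rw [hℓ]
    have h1 : |∑ s', P p s' * v s'| ≤ ‖v‖ := by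
      calc |∑ s', P p s' * v s'| ≤ ∑ s', |P p s' * v s'| := Finset.abs_sum_le_sum_abs _ _
        _ ≤ ∑ s', P p s' * ‖v‖ := by
            apply Finset.sum_le_sum
            intro s' _
            rw [abs_mul, abs_of_nonneg (hP0 p s')]
            exact mul_le_mul_of_nonneg_left (hcoord v s') (hP0 p s')
        _ = ‖v‖ := by rw [← Finset.sum_mul, hP1, one_mul]
    calc |γ * ∑ s', P p s' * v s' - v p.1|
        ≤ |γ * ∑ s', P p s' * v s'| + |v p.1| := abs_sub _ _
      _ ≤ γ * ‖v‖ + ‖v‖ := by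
          rw [abs_mul, abs_of_nonneg hγ0]
          exact add_le_add (mul_le_mul_of_nonneg_left h1 hγ0) (hcoord v p.1)
      _ = (1 + γ) * ‖v‖ := by ring
  -- the linear part of L
  set T0 : EuclideanSpace ℝ S →L[ℝ] ℝ :=
    (1 - γ) • (∑ s : S, μ s • (EuclideanSpace.proj s : EuclideanSpace ℝ S →L[ℝ] ℝ)) with hT0def
  have hT0 : ∀ v : EuclideanSpace ℝ S, T0 v = (1 - γ) * ∑ s, μ s * v s := by
    intro v
    simp [hT0def, ContinuousLinearMap.sum_apply, Finset.mul_sum]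
  -- exponential weights
  set e : EuclideanSpace ℝ S → S × A → ℝ := fun ν p => Real.exp ((r p + ℓ p ν) / β) with hedef
  have hAdve : ∀ ν p, Adv ν p = r p + ℓ p ν := by
    intro ν p
    rw [hAdv, hℓ]
    ring
  have he0 : ∀ ν p, 0 < e ν p := fun ν p => Real.exp_pos _
  set F : EuclideanSpace ℝ S → ℝ := fun ν => ∑ p, dU p * e ν p with hFdef
  have hF0 : ∀ ν, 0 < F ν := by
    intro ν
    apply Finset.sum_pos
    · intro p _
      exact mul_pos (hdU0 p) (he0 ν p)
    · exact Finset.univ_nonempty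
  set w : EuclideanSpace ℝ S → S × A → ℝ := fun ν p => dU p * e ν p / F ν with hwdef
  have hw0 : ∀ ν p, 0 ≤ w ν p := fun ν p =>
    div_nonneg (le_of_lt (mul_pos (hdU0 p) (he0 ν p))) (le_of_lt (hF0 ν))
  have hw1 : ∀ ν, ∑ p, w ν p = 1 := by
    intro ν
    have hFν : F ν = ∑ p, dU p * e ν p := rfl
    have hst : ∑ p, w ν p = (∑ p, dU p * e ν p) / F ν := by
      rw [Finset.sum_div]
    rw [hst, ← hFν, div_self (hF0 ν).ne']
  -- derivative of F
  set F' : EuclideanSpace ℝ S → (EuclideanSpace ℝ S →L[ℝ] ℝ) := fun ν =>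
    ∑ p, (dU p * e ν p / β) • ℓ p with hF'def
  have hterm : ∀ (ν : EuclideanSpace ℝ S) p,
      HasFDerivAt (fun ν => dU p * e ν p) ((dU p * e ν p / β) • ℓ p) ν := by
    intro ν p
    have h1 : HasFDerivAt (fun ν : EuclideanSpace ℝ S => (r p + ℓ p ν) / β)
        (β⁻¹ • ℓ p) ν := by
      have h0 : HasFDerivAt (fun ν : EuclideanSpace ℝ S => ℓ p ν) (ℓ p) ν :=
        (ℓ p).hasFDerivAt
      have h2 := (h0.const_add (r p)).const_mul β⁻¹
      have hfe : (fun ν : EuclideanSpace ℝ S => (r p + ℓ p ν) / β)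
          = fun ν => β⁻¹ * (r p + ℓ p ν) := by
        funext x
        ring
      rw [hfe]
      exact h2
    have h2 := h1.exp
    have h3 := h2.const_mul (dU p)
    have hde : (dU p * Real.exp ((r p + ℓ p ν) / β) / β) • ℓ p
        = dU p • (Real.exp ((r p + ℓ p ν) / β) • (β⁻¹ • ℓ p)) := by
      rw [smul_smul, smul_smul]
      congr 1
    show HasFDerivAt (fun ν => dU p * e ν p)
      ((dU p * Real.exp ((r p + ℓ p ν) / β) / β) • ℓ p) ν
    rw [hde]
    exact h3
  have hFderiv : ∀ ν, HasFDerivAt F (F' ν) ν := by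
    intro ν
    exact HasFDerivAt.fun_sum (fun p _ => hterm ν p)
  -- derivative of L
  set D : EuclideanSpace ℝ S → (EuclideanSpace ℝ S →L[ℝ] ℝ) := fun ν =>
    T0 + ∑ p, w ν p • ℓ p with hDdef
  have hLderiv : ∀ ν, HasFDerivAt L (D ν) ν := by
    intro ν
    have hLfun : L = fun ν => T0 ν + β * Real.log (F ν) := by
      funext ν
      have hFν : (∑ p, dU p * Real.exp (Adv ν p / β)) = F ν :=
        Finset.sum_congr rfl (fun p _ => by rw [hAdve])
      rw [hL, hT0, hFν]
    rw [hLfun]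
    have h1 : HasFDerivAt (fun ν : EuclideanSpace ℝ S => T0 ν) T0 ν := T0.hasFDerivAt
    have h2 : HasFDerivAt (fun ν => Real.log (F ν)) ((F ν)⁻¹ • F' ν) ν :=
      (hFderiv ν).log (hF0 ν).ne'
    have h3 := h1.add (h2.const_mul β)
    refine h3.congr_fderiv (Eq.symm ?_)
    ext v
    show (T0 + ∑ p, w ν p • ℓ p) v = _
    simp only [ContinuousLinearMap.add_apply, ContinuousLinearMap.sum_apply,
      ContinuousLinearMap.coe_smul', Pi.smul_apply, smul_eq_mul, hF'def, hwdef]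
    congr 1
    rw [Finset.mul_sum, Finset.mul_sum]
    apply Finset.sum_congr rfl
    intro p _
    have hFne : F ν ≠ 0 := (hF0 ν).ne'
    have hβne : β ≠ 0 := hβ0.ne'
    field_simp
  -- derivative of w p
  set W' : EuclideanSpace ℝ S → S × A → (EuclideanSpace ℝ S →L[ℝ] ℝ) := fun ν p =>
    (w ν p / β) • (ℓ p - ∑ q, w ν q • ℓ q) with hW'def
  have hwderiv : ∀ ν p, HasFDerivAt (fun ν => w ν p) (W' ν p) ν := by
    intro ν p
    have hinv : HasFDerivAt (fun ν => (F ν)⁻¹) ((-(F ν ^ 2)⁻¹) • F' ν) ν :=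
      (hasDerivAt_inv (hF0 ν).ne').comp_hasFDerivAt ν (hFderiv ν)
    have hmul := (hterm ν p).mul hinv
    have hfun : (fun ν => w ν p) = fun ν => dU p * e ν p * (F ν)⁻¹ := by
      funext ν
      show dU p * e ν p / F ν = dU p * e ν p * (F ν)⁻¹
      rw [div_eq_mul_inv]
    have heq : W' ν p = (dU p * e ν p) • ((-(F ν ^ 2)⁻¹) • F' ν)
        + (F ν)⁻¹ • ((dU p * e ν p / β) • ℓ p) := by
      ext v
      have hFne : F ν ≠ 0 := (hF0 ν).ne'
      have hF'v : F' ν v = (∑ q, dU q * e ν q * ℓ q v) / β := by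
        show (∑ q, (dU q * e ν q / β) • ℓ q) v = _
        rw [ContinuousLinearMap.sum_apply, Finset.sum_div]
        apply Finset.sum_congr rfl
        intro q _
        rw [ContinuousLinearMap.smul_apply, smul_eq_mul]
        ring
      have hLv : W' ν p v
          = (dU p * e ν p / F ν / β) * (ℓ p v - (∑ q, dU q * e ν q * ℓ q v) / F ν) := by
        show (w ν p / β) * ((ℓ p - ∑ q, w ν q • ℓ q) v) = _
        rw [ContinuousLinearMap.sub_apply, ContinuousLinearMap.sum_apply]
        have : ∑ q, (w ν q • ℓ q) v = (∑ q, dU q * e ν q * ℓ q v) / F ν := by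
          rw [Finset.sum_div]
          apply Finset.sum_congr rfl
          intro q _
          rw [ContinuousLinearMap.smul_apply, smul_eq_mul]
          show (dU q * e ν q / F ν) * ℓ q v = _
          ring
        rw [this]
      rw [hLv]
      rw [ContinuousLinearMap.add_apply, ContinuousLinearMap.smul_apply,
        ContinuousLinearMap.smul_apply, ContinuousLinearMap.smul_apply,
        ContinuousLinearMap.smul_apply, hF'v]
      simp only [smul_eq_mul]
      have hβne : β ≠ 0 := hβ0.ne'
      field_simp
      ring
    rw [hfun, heq]
    exact hmul
  -- derivative of D
  set H : EuclideanSpace ℝ S → (EuclideanSpace ℝ S →L[ℝ] (EuclideanSpace ℝ S →L[ℝ] ℝ)) :=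
    fun ν => ∑ p, (W' ν p).smulRight (ℓ p) with hHdef
  have hDderiv : ∀ ν, HasFDerivAt D (H ν) ν := by
    intro ν
    have hsum : HasFDerivAt (fun ν => ∑ p, w ν p • ℓ p) (H ν) ν := by
      rw [hHdef]
      exact HasFDerivAt.fun_sum (fun p _ => (hwderiv ν p).smul_const (ℓ p))
    exact hsum.const_add T0
  -- bound on ‖H ν‖
  have hCnn : (0:ℝ) ≤ (1 + γ) ^ 2 / β := by positivity
  have hHbound : ∀ ν, ‖H ν‖ ≤ (1 + γ) ^ 2 / β := by
    intro ν
    apply ContinuousLinearMap.opNorm_le_bound _ hCnn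
    intro v
    apply ContinuousLinearMap.opNorm_le_bound _ (by positivity)
    intro v'
    have hHvv' : (H ν) v v' = ∑ p, (W' ν p v) * (ℓ p v') := by
      simp [hHdef, ContinuousLinearMap.sum_apply, ContinuousLinearMap.smulRight_apply,
        smul_eq_mul]
    rw [hHvv']
    have hW'v : ∀ p, W' ν p v = (w ν p / β) * (ℓ p v - ∑ q, w ν q * (ℓ q v)) := by
      intro p
      simp [hW'def, ContinuousLinearMap.sum_apply, smul_eq_mul]
    have habs : ∀ p, |W' ν p v| = (w ν p / β) * |ℓ p v - ∑ q, w ν q * (ℓ q v)| := by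
      intro p
      rw [hW'v, abs_mul, abs_of_nonneg (div_nonneg (hw0 ν p) hβ0.le)]
    have hmad : ∑ p, w ν p * |ℓ p v - ∑ q, w ν q * (ℓ q v)| ≤ (1 + γ) * ‖v‖ :=
      mad_le_of_abs_le (w ν) (fun p => ℓ p v) (hw0 ν) (hw1 ν) ((1 + γ) * ‖v‖)
        (fun p => hℓ_bound p v)
    have hsumabs : ∑ p, |W' ν p v| ≤ ((1 + γ) * ‖v‖) / β := by
      calc ∑ p, |W' ν p v|
          = (∑ p, w ν p * |ℓ p v - ∑ q, w ν q * (ℓ q v)|) / β := by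
            rw [Finset.sum_div]
            apply Finset.sum_congr rfl
            intro p _
            rw [habs]
            ring
        _ ≤ ((1 + γ) * ‖v‖) / β := by gcongr
    calc ‖∑ p, (W' ν p v) * (ℓ p v')‖
        ≤ ∑ p, |(W' ν p v) * (ℓ p v')| := by
          rw [Real.norm_eq_abs]
          exact Finset.abs_sum_le_sum_abs _ _
      _ ≤ ∑ p, |W' ν p v| * ((1 + γ) * ‖v'‖) := by
          apply Finset.sum_le_sum
          intro p _
          rw [abs_mul]
          exact mul_le_mul_of_nonneg_left (hℓ_bound p v') (abs_nonneg _)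
      _ = (∑ p, |W' ν p v|) * ((1 + γ) * ‖v'‖) := by rw [← Finset.sum_mul]
      _ ≤ (((1 + γ) * ‖v‖) / β) * ((1 + γ) * ‖v'‖) := by
          apply mul_le_mul_of_nonneg_right hsumabs (by positivity)
      _ = (1 + γ) ^ 2 / β * ‖v‖ * ‖v'‖ := by ring
  -- Lipschitz bound for D via the mean value inequality
  have hDlip : ∀ ν ν' : EuclideanSpace ℝ S,
      ‖D ν - D ν'‖ ≤ ((1 + γ) ^ 2 / β) * ‖ν - ν'‖ := by
    intro ν ν'
    exact Convex.norm_image_sub_le_of_norm_fderiv_le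
      (fun x _ => (hDderiv x).differentiableAt)
      (fun x _ => by rw [(hDderiv x).fderiv]; exact hHbound x)
      convex_univ (Set.mem_univ ν') (Set.mem_univ ν)
  -- conclude
  intro ν ν'
  have hg : ∀ ν, gradient L ν = (InnerProductSpace.toDual ℝ (EuclideanSpace ℝ S)).symm (D ν) := by
    intro ν
    unfold gradient
    rw [(hLderiv ν).fderiv]
  rw [hg, hg, ← LinearIsometryEquiv.map_sub, LinearIsometryEquiv.norm_map]
  exact hDlip ν ν'
end

section
/- For every ν : S → ℝ, the gradient of the DemoDICE loss is orthogonal to the all-ones vector: ⟨∇L(ν), 𝟙_S⟩ = ∑_{s∈S} (∂L/∂ν(s))(ν) = 0, where 𝟙_S is the all-ones vector on S. Equivalently, the directional derivative of L at ν in the direction 𝟙_S is zero. -/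
open RealInnerProductSpace

/-- For every `ν`, the gradient of the DemoDICE loss is orthogonal to
the all-ones vector: `⟨∇L(ν), 𝟙_S⟩ = 0`. -/
theorem demoDICE_gradient_orthogonal_ones
    {S A : Type*} [Fintype S] [Fintype A] [Nonempty S] [Nonempty A]
    (γ α : ℝ) (hγ0 : 0 ≤ γ) (hγ1 : γ < 1) (hα : 0 ≤ α)
    (μ : S → ℝ) (hμ0 : ∀ s, 0 ≤ μ s) (hμ1 : ∑ s, μ s = 1)
    (dU : S × A → ℝ) (hdU0 : ∀ p, 0 < dU p) (hdU1 : ∑ p, dU p = 1)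
    (P : S × A → S → ℝ) (hP0 : ∀ p s', 0 ≤ P p s') (hP1 : ∀ p, ∑ s', P p s' = 1)
    (r : S × A → ℝ)
    (Adv : EuclideanSpace ℝ S → S × A → ℝ)
    (hAdv : ∀ ν p, Adv ν p = r p + γ * ∑ s', P p s' * ν s' - ν p.1)
    (L : EuclideanSpace ℝ S → ℝ)
    (hL : ∀ ν, L ν = (1 - γ) * ∑ s, μ s * ν s
        + (1 + α) * Real.log (∑ p, dU p * Real.exp (Adv ν p / (1 + α))))
    (ones : EuclideanSpace ℝ S) (hones : ∀ s, ones s = 1) :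
    ∀ ν : EuclideanSpace ℝ S, ⟪gradient L ν, ones⟫ = 0 := by
  intro ν
  have hα1 : (0:ℝ) < 1 + α := by linarith
  -- L is constant along the direction `ones`.
  have hconst : ∀ t : ℝ, L (ν + t • ones) = L ν := by
    intro t
    have happ : ∀ s, (ν + t • ones) s = ν s + t := by
      intro s
      simp [hones s]
    have hAdv' : ∀ p, Adv (ν + t • ones) p = Adv ν p - (1 - γ) * t := by
      intro p
      rw [hAdv, hAdv]
      simp only [happ]
      have : ∑ s', P p s' * (ν s' + t) = (∑ s', P p s' * ν s') + t := by
        simp only [mul_add, Finset.sum_add_distrib, ← Finset.sum_mul, hP1 p, one_mul]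
      rw [this]
      ring
    rw [hL, hL]
    have hsum : ∑ p, dU p * Real.exp (Adv (ν + t • ones) p / (1 + α))
        = Real.exp (-(1 - γ) * t / (1 + α)) * ∑ p, dU p * Real.exp (Adv ν p / (1 + α)) := by
      rw [Finset.mul_sum]
      congr 1; ext p
      rw [hAdv', sub_div, Real.exp_sub]
      rw [neg_mul, neg_div, Real.exp_neg, div_eq_mul_inv]
      ring
    have hpos : 0 < ∑ p, dU p * Real.exp (Adv ν p / (1 + α)) := by
      apply Finset.sum_pos
      · intro p _; exact mul_pos (hdU0 p) (Real.exp_pos _)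
      · exact Finset.univ_nonempty
    rw [hsum, Real.log_mul (ne_of_gt (Real.exp_pos _)) (ne_of_gt hpos), Real.log_exp]
    have hsum1 : ∑ s, μ s * (ν s + t) = (∑ s, μ s * ν s) + t := by
      simp only [mul_add, Finset.sum_add_distrib, ← Finset.sum_mul, hμ1, one_mul]
    simp only [happ, hsum1]
    field_simp
    ring
  -- L is differentiable at ν.
  have hdiff : DifferentiableAt ℝ L ν := by
    have hLeq : L = fun w : EuclideanSpace ℝ S => (1 - γ) * ∑ s, μ s * w s
        + (1 + α) * Real.log (∑ p, dU p *
            Real.exp ((r p + γ * ∑ s', P p s' * w s' - w p.1) / (1 + α))) := by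
      funext w
      rw [hL]
      simp only [hAdv]
    rw [hLeq]
    have hproj : ∀ s : S, DifferentiableAt ℝ (fun w : EuclideanSpace ℝ S => w s) ν :=
      fun s => (EuclideanSpace.proj (𝕜 := ℝ) s).differentiableAt
    have h1 : DifferentiableAt ℝ (fun w : EuclideanSpace ℝ S => ∑ s, μ s * w s) ν := by
      apply DifferentiableAt.fun_sum
      intro s _
      exact (hproj s).const_mul _
    have hinner : ∀ p : S × A, DifferentiableAt ℝ
        (fun w : EuclideanSpace ℝ S =>
          (r p + γ * ∑ s', P p s' * w s' - w p.1) / (1 + α)) ν := by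
      intro p
      have hnum : DifferentiableAt ℝ
          (fun w : EuclideanSpace ℝ S => r p + γ * ∑ s', P p s' * w s' - w p.1) ν := by
        apply DifferentiableAt.sub
        · apply DifferentiableAt.const_add
          apply DifferentiableAt.const_mul
          apply DifferentiableAt.fun_sum
          intro s' _
          exact (hproj s').const_mul _
        · exact hproj p.1
      have heq : (fun w : EuclideanSpace ℝ S =>
          (r p + γ * ∑ s', P p s' * w s' - w p.1) / (1 + α))
          = fun w : EuclideanSpace ℝ S =>
          (r p + γ * ∑ s', P p s' * w s' - w p.1) * (1 + α)⁻¹ := by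
        funext w; rw [div_eq_mul_inv]
      rw [heq]
      exact hnum.mul_const _
    have h2 : DifferentiableAt ℝ (fun w : EuclideanSpace ℝ S =>
        ∑ p, dU p * Real.exp ((r p + γ * ∑ s', P p s' * w s' - w p.1) / (1 + α))) ν := by
      apply DifferentiableAt.fun_sum
      intro p _
      exact ((Real.differentiable_exp.differentiableAt).comp ν (hinner p)).const_mul _
    have hpos : 0 < ∑ p, dU p *
        Real.exp ((r p + γ * ∑ s', P p s' * ν s' - ν p.1) / (1 + α)) := by
      apply Finset.sum_pos
      · intro p _; exact mul_pos (hdU0 p) (Real.exp_pos _)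
      · exact Finset.univ_nonempty
    exact ((h1.const_mul _).add (((h2.log (ne_of_gt hpos))).const_mul _))
  -- The derivative along `ones` is zero.
  have hline : HasDerivAt (fun t : ℝ => ν + t • ones) ones 0 := by
    simpa using ((hasDerivAt_id (0:ℝ)).smul_const ones).const_add ν
  have hcomp : HasDerivAt (fun t : ℝ => L (ν + t • ones)) (fderiv ℝ L ν ones) 0 := by
    have h0 : ν + (0:ℝ) • ones = ν := by simp
    have hF : HasFDerivAt L (fderiv ℝ L ν) (ν + (0:ℝ) • ones) := by
      rw [h0]; exact hdiff.hasFDerivAt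
    have := hF.comp_hasDerivAt 0 hline
    exact this
  have hzero : HasDerivAt (fun t : ℝ => L (ν + t • ones)) 0 0 := by
    have : (fun t : ℝ => L (ν + t • ones)) = fun _ => L ν := funext hconst
    rw [this]
    exact hasDerivAt_const _ _
  have hfd : fderiv ℝ L ν ones = 0 := hcomp.unique hzero
  -- Conclude via the definition of the gradient.
  rw [gradient]
  rw [InnerProductSpace.toDual_symm_apply]
  exact hfd
end

section
/- Let f : ℝ^S → ℝ (S a finite nonempty set) be convex and differentiable with L_f-Lipschitz gradient (L_f > 0), and suppose ⟨∇f(ν), 𝟙_S⟩ = 0 for all ν. Let ν* be a minimizer of f, let S* := {ν* + C·𝟙_S : C ∈ ℝ}, and suppose f satisfies quadratic growth with constant c > 0: f(ν) − f(ν*) ≥ (c/2)‖ν − Π_{S*}(ν)‖₂² for all ν ∉ S*, where Π_{S*} is the orthogonal projection onto S*. Let ν^{(t+1)} := ν^{(t)} − (1/L_f)∇f(ν^{(t)}) be gradient descent iterates from ν^{(0)}, and set ν̂* := Π_{S*}(ν^{(0)}). Then for all t ≥ 1, ‖ν^{(t)} − ν̂*‖₂² ≤ (4 L_f / c) · ‖ν^{(0)}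 − ν̂*‖₂² / t. -/
open RealInnerProductSpace

theorem myLineDeriv {F : Type*} [NormedAddCommGroup F] [InnerProductSpace ℝ F] [CompleteSpace F]
    (f : F → ℝ) (hdiff : Differentiable ℝ f) (x v : F) (s : ℝ) :
    HasDerivAt (fun s : ℝ => f (x + s • v)) ⟪gradient f (x + s • v), v⟫ s := by
  have h1 : HasDerivAt (fun s : ℝ => x + s • v) v s := by
    simpa using ((hasDerivAt_id s).smul_const v).const_add x
  have h2 := (hdiff (x + s • v)).hasGradientAt
  rw [hasGradientAt_iff_hasFDerivAt] at h2
  refine (h2.comp_hasDerivAt s h1).congr_deriv ?_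
  simp

theorem convex_grad_ineq {F : Type*} [NormedAddCommGroup F] [InnerProductSpace ℝ F] [CompleteSpace F]
    (f : F → ℝ) (hconv : ConvexOn ℝ Set.univ f) (hdiff : Differentiable ℝ f) (x y : F) :
    f x + ⟪gradient f x, y - x⟫ ≤ f y := by
  set φ : ℝ → ℝ := fun s => f (x + s • (y - x)) with hφ
  have hd : ∀ s : ℝ, HasDerivAt φ ⟪gradient f (x + s • (y - x)), y - x⟫ s :=
    fun s => myLineDeriv f hdiff x (y - x) s
  have hφconv : ConvexOn ℝ Set.univ φ := by
    refine ⟨convex_univ, fun a _ b _ p q hp hq hpq => ?_⟩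
    have he : x + (p • a + q • b) • (y - x) = p • (x + a • (y - x)) + q • (x + b • (y - x)) := by
      rw [add_smul, smul_add, smul_add, smul_smul, smul_smul]
      simp only [smul_eq_mul]; match_scalars <;> linarith
    show f (x + (p • a + q • b) • (y - x)) ≤ _
    rw [he]
    exact hconv.2 (Set.mem_univ _) (Set.mem_univ _) hp hq hpq
  have key := hφconv.le_slope_of_hasDerivAt (Set.mem_univ (0:ℝ)) (Set.mem_univ (1:ℝ)) one_pos (hd 0)
  have hs : slope φ 0 1 = φ 1 - φ 0 := by simp [slope_def_field]
  rw [hs] at key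
  have h0 : φ 0 = f x := by simp [hφ]
  have h1 : φ 1 = f y := by simp [hφ]
  simp only [zero_smul, add_zero] at key
  rw [h0, h1] at key
  linarith

theorem smooth_upper {F : Type*} [NormedAddCommGroup F] [InnerProductSpace ℝ F] [CompleteSpace F]
    (f : F → ℝ) (hdiff : Differentiable ℝ f) (Lf : ℝ)
    (hlip : ∀ x y : F, ‖gradient f x - gradient f y‖ ≤ Lf * ‖x - y‖) (x y : F) :
    f y ≤ f x + ⟪gradient f x, y - x⟫ + Lf / 2 * ‖y - x‖ ^ 2 := by
  set v := y - x with hv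
  set K := Lf * ‖v‖ ^ 2 with hK
  set ψ : ℝ → ℝ := fun s => f (x + s • v) - (⟪gradient f x, v⟫ * s + K / 2 * s ^ 2) with hψ
  have hψd : ∀ s : ℝ, HasDerivAt ψ (⟪gradient f (x + s • v), v⟫ - (⟪gradient f x, v⟫ + K * s)) s := by
    intro s
    have hp : HasDerivAt (fun s : ℝ => ⟪gradient f x, v⟫ * s + K / 2 * s ^ 2)
        (⟪gradient f x, v⟫ + K * s) s := by
      have h1 : HasDerivAt (fun s : ℝ => ⟪gradient f x, v⟫ * s) ⟪gradient f x, v⟫ s := by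
        simpa using (hasDerivAt_id s).const_mul ⟪gradient f x, v⟫
      have h2 : HasDerivAt (fun s : ℝ => K / 2 * s ^ 2) (K * s) s := by
        have := (hasDerivAt_pow 2 s).const_mul (K / 2)
        refine this.congr_deriv ?_
        ring
      exact h1.add h2
    exact (myLineDeriv f hdiff x v s).sub hp
  have hmono : AntitoneOn ψ (Set.Icc (0:ℝ) 1) := by
    apply antitoneOn_of_deriv_nonpos (convex_Icc 0 1)
    · exact Continuous.continuousOn (by
        have : Differentiable ℝ ψ := fun s => (hψd s).differentiableAt
        exact this.continuous)
    · intro s _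
      exact ((hψd s).differentiableAt).differentiableWithinAt
    · intro s hs
      rw [interior_Icc] at hs
      rw [(hψd s).deriv]
      have h1 : ⟪gradient f (x + s • v) - gradient f x, v⟫ ≤ Lf * s * ‖v‖ ^ 2 := by
        calc ⟪gradient f (x + s • v) - gradient f x, v⟫
            ≤ ‖gradient f (x + s • v) - gradient f x‖ * ‖v‖ := real_inner_le_norm _ _
          _ ≤ (Lf * ‖(x + s • v) - x‖) * ‖v‖ := by
              apply mul_le_mul_of_nonneg_right (hlip _ _) (norm_nonneg _)
          _ = Lf * s * ‖v‖ ^ 2 := by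
              rw [add_sub_cancel_left, norm_smul]
              simp [abs_of_pos hs.1]
              ring
      rw [inner_sub_left] at h1
      have : K * s = Lf * s * ‖v‖ ^ 2 := by rw [hK]; ring
      linarith
  have hfinal := hmono (Set.left_mem_Icc.2 zero_le_one) (Set.right_mem_Icc.2 zero_le_one) zero_le_one
  have h0 : ψ 0 = f x := by simp [hψ]
  have h1 : ψ 1 = f y - (⟪gradient f x, v⟫ + K / 2) := by simp [hψ, hv]
  rw [h0, h1] at hfinal
  rw [hK] at hfinal
  linarith

set_option maxHeartbeats 2000000 in
theorem gradient_descent_quadratic_growth_rate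
    {S : Type*} [Fintype S] [Nonempty S]
    (f : EuclideanSpace ℝ S → ℝ)
    (hconv : ConvexOn ℝ Set.univ f)
    (hdiff : Differentiable ℝ f)
    (Lf : ℝ) (hLf : 0 < Lf)
    (hlip : ∀ x y : EuclideanSpace ℝ S,
      ‖gradient f x - gradient f y‖ ≤ Lf * ‖x - y‖)
    (ones : EuclideanSpace ℝ S) (hones : ∀ s, ones s = 1)
    (horth : ∀ ν, ⟪gradient f ν, ones⟫ = 0)
    (νstar : EuclideanSpace ℝ S) (hmin : ∀ x, f νstar ≤ f x)
    (Sstar : Set (EuclideanSpace ℝ S))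
    (hSstar : Sstar = {y | ∃ C : ℝ, y = νstar + C • ones})
    (proj : EuclideanSpace ℝ S → EuclideanSpace ℝ S)
    (hproj_mem : ∀ x, proj x ∈ Sstar)
    (hproj_min : ∀ x, ∀ y ∈ Sstar, ‖x - proj x‖ ≤ ‖x - y‖)
    (c : ℝ) (hc : 0 < c)
    (hgrowth : ∀ ν, ν ∉ Sstar → (c / 2) * ‖ν - proj ν‖ ^ 2 ≤ f ν - f νstar)
    (ν : ℕ → EuclideanSpace ℝ S)
    (hiter : ∀ t, ν (t + 1) = ν t - (1 / Lf) • gradient f (ν t))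
    (νhat : EuclideanSpace ℝ S) (hνhat : νhat = proj (ν 0)) :
    ∀ t : ℕ, 1 ≤ t →
      ‖ν t - νhat‖ ^ 2 ≤ (4 * Lf / c) * ‖ν 0 - νhat‖ ^ 2 / t := by
  -- ones is nonzero
  have hones_ne : ‖ones‖ ^ 2 > 0 := by
    have h0 : ones ≠ 0 := by
      intro h
      have := hones (Classical.arbitrary S)
      rw [h] at this
      simp at this
    have hn : 0 < ‖ones‖ := norm_pos_iff.2 h0
    positivity
  -- orthogonality of projection residual
  have hproj_orth : ∀ x, ⟪x - proj x, ones⟫ = 0 := by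
    intro x
    obtain ⟨C0, hC0⟩ : ∃ C0, proj x = νstar + C0 • ones := by
      have := hproj_mem x; rw [hSstar] at this; exact this
    set t := ⟪x - proj x, ones⟫ with ht
    have key : ∀ C : ℝ, 0 ≤ - (2 * C * t) + C ^ 2 * ‖ones‖ ^ 2 := by
      intro C
      have hmem : proj x + C • ones ∈ Sstar := by
        rw [hSstar]
        exact ⟨C0 + C, by rw [hC0, add_smul]; abel⟩
      have h := hproj_min x _ hmem
      have hsq := mul_self_le_mul_self (norm_nonneg _) h
      have hexp : ‖x - (proj x + C • ones)‖ ^ 2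
          = ‖x - proj x‖ ^ 2 - 2 * C * t + C ^ 2 * ‖ones‖ ^ 2 := by
        have : x - (proj x + C • ones) = (x - proj x) - C • ones := by abel
        rw [this, norm_sub_sq_real, real_inner_smul_right, norm_smul]
        simp only [mul_pow, sq_abs, Real.norm_eq_abs]
        ring
      nlinarith [hsq, hexp]
    show t = 0
    by_contra hne
    set n := ‖ones‖ ^ 2 with hn
    have h1 := key (t / n)
    have h2 : -(2 * (t / n) * t) + (t / n) ^ 2 * n = -(t ^ 2 / n) := by
      field_simp
      ring
    have h3 : 0 < t ^ 2 / n := by positivity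
    rw [h2] at h1
    linarith
  -- uniqueness of projection
  have hproj_unique : ∀ x y, y ∈ Sstar → ⟪x - y, ones⟫ = 0 → proj x = y := by
    intro x y hy hxy
    obtain ⟨C1, hC1⟩ : ∃ C1, proj x = νstar + C1 • ones := by
      have := hproj_mem x; rw [hSstar] at this; exact this
    obtain ⟨C2, hC2⟩ : ∃ C2, y = νstar + C2 • ones := by
      rw [hSstar] at hy; exact hy
    have hdiffy : proj x - y = (C1 - C2) • ones := by
      rw [hC1, hC2, sub_smul]; abel
    have hexp : ‖x - proj x‖ ^ 2
        = ‖x - y‖ ^ 2 - 2 * ((C1 - C2) * ⟪x - y, ones⟫) + (C1 - C2) ^ 2 * ‖ones‖ ^ 2 := by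
      have h : x - proj x = (x - y) - (C1 - C2) • ones := by rw [← hdiffy]; abel
      rw [h, norm_sub_sq_real, real_inner_smul_right, norm_smul]
      simp only [mul_pow, sq_abs, Real.norm_eq_abs]
      try ring
    rw [hxy] at hexp
    have hle := hproj_min x y hy
    have hsq := mul_self_le_mul_self (norm_nonneg _) hle
    have hzero : (C1 - C2) ^ 2 * ‖ones‖ ^ 2 ≤ 0 := by nlinarith
    have : C1 - C2 = 0 := by
      by_contra h
      have : (C1 - C2) ^ 2 > 0 := by positivity
      nlinarith
    rw [hC1, hC2, show C1 = C2 by linarith]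
  -- invariant inner product along iterates
  have hinner_t : ∀ t, ⟪ν t - νhat, ones⟫ = 0 := by
    intro t
    induction t with
    | zero => rw [hνhat]; exact hproj_orth (ν 0)
    | succ n ih =>
      rw [hiter n]
      have : ν n - (1 / Lf) • gradient f (ν n) - νhat
          = (ν n - νhat) - (1 / Lf) • gradient f (ν n) := by abel
      rw [this, inner_sub_left, real_inner_smul_left, horth, ih]
      ring
  have hνhat_mem : νhat ∈ Sstar := hνhat ▸ hproj_mem (ν 0)
  have hproj_t : ∀ t, proj (ν t) = νhat := fun t =>
    hproj_unique (ν t) νhat hνhat_mem (hinner_t t)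
  -- f is constant on Sstar: f νhat = f νstar
  have hfνhat : f νhat = f νstar := by
    obtain ⟨C, hC⟩ : ∃ C, νhat = νstar + C • ones := by
      rw [hSstar] at hνhat_mem; exact hνhat_mem
    have hconst : ∀ s : ℝ, f (νstar + s • (C • ones)) = f νstar := by
      intro s
      have hd : ∀ u : ℝ, HasDerivAt (fun u : ℝ => f (νstar + u • (C • ones))) 0 u := by
        intro u
        have := myLineDeriv f hdiff νstar (C • ones) u
        rwa [real_inner_smul_right, horth, mul_zero] at this
      have := is_const_of_deriv_eq_zero (fun u => (hd u).differentiableAt)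
        (fun u => (hd u).deriv) s 0
      simpa using this
    have := hconst 1
    rw [one_smul, ← hC] at this
    exact this
  -- abbreviations
  obtain ⟨g, hg⟩ : ∃ g : ℕ → EuclideanSpace ℝ S, g = fun t => gradient f (ν t) := ⟨_, rfl⟩
  obtain ⟨a, ha⟩ : ∃ a : ℕ → ℝ, a = fun t => f (ν t) - f νstar := ⟨_, rfl⟩
  obtain ⟨d, hd⟩ : ∃ d : ℕ → ℝ, d = fun t => ‖ν t - νhat‖ ^ 2 := ⟨_, rfl⟩
  have ha_nonneg : ∀ t, 0 ≤ a t := by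
    intro t; simp only [ha]; exact sub_nonneg.2 (hmin _)
  have hd_nonneg : ∀ t, 0 ≤ d t := by
    intro t; simp only [hd]; positivity
  -- quadratic growth along iterates
  have hQG : ∀ t, c / 2 * d t ≤ a t := by
    intro t
    simp only [ha, hd]
    by_cases h : ν t ∈ Sstar
    · have h1 := hproj_min (ν t) (ν t) h
      rw [sub_self, norm_zero] at h1
      have h0 : ν t - proj (ν t) = 0 := norm_le_zero_iff.1 h1
      have h2 : ν t = proj (ν t) := by rwa [sub_eq_zero] at h0
      have heq : ν t = νhat := by rw [h2, hproj_t]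
      rw [heq, sub_self, norm_zero]
      have hz : c / 2 * (0:ℝ) ^ 2 = 0 := by ring
      rw [hz]
      exact sub_nonneg.2 (hmin _)
    · have h1 := hgrowth (ν t) h
      rw [hproj_t] at h1
      exact h1
  -- descent lemma along iterates
  have hdesc : ∀ t, a (t + 1) ≤ a t - 1 / (2 * Lf) * ‖g t‖ ^ 2 := by
    intro t
    simp only [ha, hg]
    have h := smooth_upper f hdiff Lf hlip (ν t) (ν (t + 1))
    rw [hiter t] at h
    have hyx : ν t - (1 / Lf) • gradient f (ν t) - ν t = -((1 / Lf) • gradient f (ν t)) := by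
      abel
    rw [hyx, inner_neg_right, real_inner_smul_right, real_inner_self_eq_norm_sq, norm_neg,
      norm_smul, Real.norm_eq_abs, abs_of_pos (show (0:ℝ) < 1 / Lf by positivity)] at h
    have he : f (ν t) + -(1 / Lf * ‖gradient f (ν t)‖ ^ 2)
        + Lf / 2 * (1 / Lf * ‖gradient f (ν t)‖) ^ 2
        = f (ν t) - 1 / (2 * Lf) * ‖gradient f (ν t)‖ ^ 2 := by
      field_simp
      ring
    rw [he] at h
    rw [hiter t]
    linarith [h]
  have hgnorm : ∀ t, ‖g t‖ ^ 2 ≤ 2 * Lf * a t := by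
    intro t
    have h1 := hdesc t
    have h2 := ha_nonneg (t + 1)
    have h3 : 1 / (2 * Lf) * ‖g t‖ ^ 2 ≤ a t := by linarith
    have h4 : (2 * Lf) * (1 / (2 * Lf) * ‖g t‖ ^ 2) = ‖g t‖ ^ 2 := by
      field_simp
    calc ‖g t‖ ^ 2 = (2 * Lf) * (1 / (2 * Lf) * ‖g t‖ ^ 2) := h4.symm
      _ ≤ (2 * Lf) * a t := mul_le_mul_of_nonneg_left h3 (by positivity)
  -- convexity inequality along iterates
  have hconv_t : ∀ t, a t ≤ ⟪g t, ν t - νhat⟫ := by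
    intro t
    simp only [ha, hg]
    have h := convex_grad_ineq f hconv hdiff (ν t) νhat
    rw [hfνhat] at h
    have h2 : ⟪gradient f (ν t), νhat - ν t⟫ = -⟪gradient f (ν t), ν t - νhat⟫ := by
      rw [← inner_neg_right]
      congr 1
      abel
    rw [h2] at h
    linarith
  -- distance decreasing
  have hd_dec : ∀ t, d (t + 1) ≤ d t := by
    intro t
    simp only [hd]
    have hexp : ‖ν (t + 1) - νhat‖ ^ 2 = ‖ν t - νhat‖ ^ 2
        - 2 * (1 / Lf) * ⟪ν t - νhat, gradient f (ν t)⟫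
        + (1 / Lf) ^ 2 * ‖gradient f (ν t)‖ ^ 2 := by
      rw [hiter t]
      have h : ν t - (1 / Lf) • gradient f (ν t) - νhat
          = (ν t - νhat) - (1 / Lf) • gradient f (ν t) := by abel
      rw [h, norm_sub_sq_real, real_inner_smul_right, norm_smul, Real.norm_eq_abs,
        abs_of_pos (show (0:ℝ) < 1 / Lf by positivity)]
      ring
    have h1 : a t ≤ ⟪ν t - νhat, gradient f (ν t)⟫ := by
      rw [real_inner_comm]
      simpa only [hg] using hconv_t t
    have h2 : ‖gradient f (ν t)‖ ^ 2 ≤ 2 * Lf * a t := by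
      simpa only [hg] using hgnorm t
    have e1 : 2 * (1 / Lf) * a t ≤ 2 * (1 / Lf) * ⟪ν t - νhat, gradient f (ν t)⟫ :=
      mul_le_mul_of_nonneg_left h1 (by positivity)
    have e2 : (1 / Lf) ^ 2 * ‖gradient f (ν t)‖ ^ 2 ≤ (1 / Lf) ^ 2 * (2 * Lf * a t) :=
      mul_le_mul_of_nonneg_left h2 (by positivity)
    have e3 : (1 / Lf) ^ 2 * (2 * Lf * a t) = 2 * (1 / Lf) * a t := by
      field_simp
    rw [hexp]
    linarith
  have hd_le_d0 : ∀ t, d t ≤ d 0 := by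
    intro t
    induction t with
    | zero => exact le_refl _
    | succ n ih => exact le_trans (hd_dec n) ih
  -- Cauchy-Schwarz bound
  have hCS : ∀ t, a t ^ 2 ≤ ‖g t‖ ^ 2 * d t := by
    intro t
    simp only [hd, hg]
    have h3 : a t ≤ ‖gradient f (ν t)‖ * ‖ν t - νhat‖ := by
      have h := le_trans (hconv_t t) (real_inner_le_norm (g t) (ν t - νhat))
      simpa only [hg] using h
    have h4 := mul_self_le_mul_self (ha_nonneg t) h3
    have e2 : (‖gradient f (ν t)‖ * ‖ν t - νhat‖) * (‖gradient f (ν t)‖ * ‖ν t - νhat‖)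
        = ‖gradient f (ν t)‖ ^ 2 * ‖ν t - νhat‖ ^ 2 := by ring
    rw [pow_two, ← e2]
    exact h4
  -- main sublinear bound
  by_cases hd0 : d 0 = 0
  · intro t ht
    have h2 : d t = 0 := le_antisymm (hd0 ▸ hd_le_d0 t) (hd_nonneg t)
    have hfin : d t ≤ (4 * Lf / c) * d 0 / t := by
      rw [h2, hd0]
      simp
    simpa only [hd] using hfin
  · have hd0pos : 0 < d 0 := lt_of_le_of_ne (hd_nonneg 0) (Ne.symm hd0)
    obtain ⟨B, hB⟩ : ∃ B : ℝ, B = 2 * Lf * d 0 := ⟨_, rfl⟩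
    have hBpos : 0 < B := by rw [hB]; positivity
    have hrec : ∀ t, a (t + 1) ≤ a t - a t ^ 2 / B := by
      intro t
      have h1 := hCS t
      have h2 : ‖g t‖ ^ 2 * d t ≤ ‖g t‖ ^ 2 * d 0 :=
        mul_le_mul_of_nonneg_left (hd_le_d0 t) (by positivity)
      have h3 : a t ^ 2 ≤ ‖g t‖ ^ 2 * d 0 := le_trans h1 h2
      have h4 : a t ^ 2 / d 0 ≤ ‖g t‖ ^ 2 := (div_le_iff₀ hd0pos).2 h3
      have h5 := hdesc t
      have h6 : 1 / (2 * Lf) * (a t ^ 2 / d 0) ≤ 1 / (2 * Lf) * ‖g t‖ ^ 2 :=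
        mul_le_mul_of_nonneg_left h4 (by positivity)
      have h7 : 1 / (2 * Lf) * (a t ^ 2 / d 0) = a t ^ 2 / B := by
        rw [hB]
        field_simp
      linarith
    have hbound : ∀ t : ℕ, 1 ≤ t → a t ≤ B / t := by
      intro t ht
      induction t with
      | zero => omega
      | succ n ih =>
        by_cases hn : 1 ≤ n
        · have ihn := ih hn
          have hrecn := hrec n
          have hx0 : 0 ≤ a n := ha_nonneg n
          have hnpos : (0:ℝ) < (n:ℝ) := by exact_mod_cast hn
          have hxt : a n * (n:ℝ) ≤ B := by
            rw [le_div_iff₀ hnpos] at ihn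
            exact ihn
          have hn1 : (1:ℝ) ≤ (n:ℝ) := by exact_mod_cast hn
          have hxB : a n ≤ B := by nlinarith [hxt, hn1, hx0]
          have hstep' : a (n + 1) * B ≤ a n * B - a n ^ 2 := by
            have h := mul_le_mul_of_nonneg_right hrecn (le_of_lt hBpos)
            have h2 : (a n - a n ^ 2 / B) * B = a n * B - a n ^ 2 := by
              field_simp
            nlinarith [h, h2]
          have hcast : ((n + 1 : ℕ) : ℝ) = (n : ℝ) + 1 := by push_cast; ring
          rw [hcast, le_div_iff₀ (by positivity : (0:ℝ) < (n:ℝ) + 1)]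
          nlinarith [hstep', mul_nonneg (sub_nonneg.2 hxt) (sub_nonneg.2 hxB),
            ha_nonneg (n + 1), hBpos, hn1, hx0, sq_nonneg (a n)]
        · have hn0 : n = 0 := by omega
          subst hn0
          have h1 : a 0 ^ 2 ≤ 2 * Lf * a 0 * d 0 := by
            have hcs := hCS 0
            have hg2 : ‖g 0‖ ^ 2 * d 0 ≤ 2 * Lf * a 0 * d 0 := by
              have := mul_le_mul_of_nonneg_right (hgnorm 0) (le_of_lt hd0pos)
              linarith
            have hdd : ‖g 0‖ ^ 2 * d 0 ≥ ‖g 0‖ ^ 2 * d 0 := le_refl _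
            nlinarith [hcs, hg2, mul_le_mul_of_nonneg_left (hd_le_d0 0) (sq_nonneg ‖g 0‖)]
          have ha0 : a 0 ≤ B := by
            by_cases h : a 0 = 0
            · rw [h]
              exact le_of_lt hBpos
            · have hpos : 0 < a 0 := lt_of_le_of_ne (ha_nonneg 0) (Ne.symm h)
              rw [hB]
              nlinarith [h1, hpos]
          have h2 : a 1 ≤ a 0 := by
            have := hrec 0
            have hnn : 0 ≤ a 0 ^ 2 / B := div_nonneg (sq_nonneg _) (le_of_lt hBpos)
            linarith
          calc a 1 ≤ a 0 := h2
            _ ≤ B := ha0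
            _ = B / ((0:ℕ) + 1 : ℕ) := by norm_num
    intro t ht
    have hat := hbound t ht
    have htpos : (0:ℝ) < (t:ℝ) := by exact_mod_cast Nat.pos_of_ne_zero (by omega)
    have h1 : d t ≤ 2 / c * a t := by
      have h := hQG t
      have he : 2 / c * (c / 2 * d t) = d t := by
        field_simp
      calc d t = 2 / c * (c / 2 * d t) := he.symm
        _ ≤ 2 / c * a t := mul_le_mul_of_nonneg_left h (by positivity)
    have hfin : d t ≤ (4 * Lf / c) * d 0 / t := by
      calc d t ≤ 2 / c * a t := h1
        _ ≤ 2 / c * (B / t) := mul_le_mul_of_nonneg_left hat (by positivity)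
        _ = (4 * Lf / c) * d 0 / t := by
            rw [hB]
            field_simp
            ring
    simpa only [hd] using hfin
end
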